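/- Let F be a subfunctor of the identity functor on the category of groups such that F(ℤ) = ℤ. Then F(G) = G for all groups G, i.e., F is the identity functor. -/

import Mathlib

open CategoryTheory

/-- A subfunctor of the identity functor on the category of groups. -/
structure GrpIdSubfunctor : Type 1 where
  sub : ∀ G : GrpCat.{0}, Subgroup G
  map_le : ∀ {G H : GrpCat.{0}} (φ : G ⟶ H), (sub G).map φ.hom ≤ sub H

theorem stmt_14 (F : GrpIdSubfunctor)
    (hZ : F.sub (GrpCat.of (Multiplicative ℤ)) = ⊤) :
    ∀ G : GrpCat.{0}, F.sub G = ⊤ := by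
  intro G
  rw [eq_top_iff]
  intro g _
  let φ : GrpCat.of (Multiplicative ℤ) ⟶ G := GrpCat.ofHom (zpowersHom G g)
  have hmem : g ∈ (F.sub (GrpCat.of (Multiplicative ℤ))).map φ.hom := by
    rw [hZ]
    exact ⟨Multiplicative.ofAdd (1:ℤ), trivial, by show (zpowersHom (G:Type) g) (Multiplicative.ofAdd 1) = g; simp⟩
  exact F.map_le φ hmem
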